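/- For the cascade network with source distribution p0(x), the coordination capacity region C_{p0} is a convex set of triples (R1, R2, p(y,z|x)); consequently, for each fixed conditional pmf p(y,z|x) the rate-coordination region R_{p0}(p(y,z|x)) = {(R1,R2) : (R1,R2,p(y,z|x)) ∈ C_{p0}} is convex, and for each fixed rate pair (R1,R2) the coordination-rate region P_{p0}(R1,R2) = {p(y,z|x) : (R1,R2,p(y,z|x)) ∈ C_{p0}} is convex. -/

import Mathlib

open Filter

/-- A probability mass function on a finite alphabet. -/
def IsPMF {α : Type} [Fintype α] (p : α → ℝ) : Prop :=
  (∀ a, 0 ≤ p a) ∧ ∑ a, p a = 1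

/-- Total variation distance: half the `L¹` distance. -/
noncomputable def tv {α : Type} [Fintype α] (p q : α → ℝ) : ℝ :=
  (1 / 2) * ∑ a, |p a - q a|

open Classical in
/-- Joint type (empirical distribution) of a sequence. -/
noncomputable def jointType {α : Type} (n : ℕ) (s : Fin n → α) : α → ℝ :=
  fun a => ((Finset.univ.filter fun t => s t = a).card : ℝ) / n

open Classical in
/-- Pushforward of a mass function along a map. -/
noncomputable def pmfMap {S α : Type} [Fintype S] (p : S → ℝ) (f : S → α) : α → ℝ :=
  fun a => ∑ s, if f s = a then p s else 0

/-- Shannon entropy, base 2, with the convention `0 log 0 = 0`. -/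
noncomputable def H2 {α : Type} [Fintype α] (p : α → ℝ) : ℝ :=
  ∑ a, -(p a * Real.logb 2 (p a))

/-- Mutual information `I(f(S); g(S))` for `S ∼ p`. -/
noncomputable def MI {S α β : Type} [Fintype S] [Fintype α] [Fintype β]
    (p : S → ℝ) (f : S → α) (g : S → β) : ℝ :=
  H2 (pmfMap p f) + H2 (pmfMap p g) - H2 (pmfMap p fun s => (f s, g s))

/-- Conditional mutual information `I(f(S); g(S) | h(S))` for `S ∼ p`. -/
noncomputable def condMI {S α β γ : Type} [Fintype S] [Fintype α] [Fintype β] [Fintype γ]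
    (p : S → ℝ) (f : S → α) (g : S → β) (h : S → γ) : ℝ :=
  H2 (pmfMap p fun s => (f s, h s)) + H2 (pmfMap p fun s => (g s, h s))
    - H2 (pmfMap p fun s => (f s, g s, h s)) - H2 (pmfMap p h)

/-- The number of messages `⌈2^{nR}⌉` available at rate `R` and blocklength `n`. -/
noncomputable def msgCount (n : ℕ) (R : ℝ) : ℕ := ⌈(2 : ℝ) ^ ((n : ℝ) * R)⌉₊

open Classical in
/-- Probability of the event `E` under the (mass) distribution `μ`. -/
noncomputable def probOf {α : Type} [Fintype α] (μ : α → ℝ) (E : α → Prop) : ℝ :=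
  ∑ a, if E a then μ a else 0

open Classical in
/-- Probability of an event over `(X^n, ω)` where `X^n` is i.i.d. `p0` independent of the
common randomness `ω ∼ pω`. -/
noncomputable def probIIDCR {𝒳 : Type} [Fintype 𝒳] (p0 : 𝒳 → ℝ) (n m : ℕ)
    (pω : Fin m → ℝ) (E : (Fin n → 𝒳) → Fin m → Prop) : ℝ :=
  ∑ xs : Fin n → 𝒳, ∑ ω : Fin m, if E xs ω then (∏ t, p0 (xs t)) * pω ω else 0

/-- Achievability of `p(y,z|x)` at rates `(R1,R2)` in the cascade network, using
coordination codes with common randomness on finite probability spaces. -/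
def CascadeAchievableCR {𝒳 𝒴 𝒵 : Type} [Fintype 𝒳] [Fintype 𝒴] [Fintype 𝒵]
    (p0 : 𝒳 → ℝ) (R1 R2 : ℝ) (q : 𝒳 → 𝒴 × 𝒵 → ℝ) : Prop :=
  ∃ m : ℕ → ℕ, ∃ pω : (n : ℕ) → Fin (m n) → ℝ,
  ∃ enc : (n : ℕ) → (Fin n → 𝒳) → Fin (m n) → Fin (msgCount n R1),
  ∃ rc : (n : ℕ) → Fin (msgCount n R1) → Fin (m n) → Fin (msgCount n R2),
  ∃ decY : (n : ℕ) → Fin (msgCount n R1) → Fin (m n) → (Fin n → 𝒴),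
  ∃ decZ : (n : ℕ) → Fin (msgCount n R2) → Fin (m n) → (Fin n → 𝒵),
    (∀ n, IsPMF (pω n)) ∧
    ∀ ε > 0,
      Tendsto (fun n => probIIDCR p0 n (m n) (pω n) fun xs ω =>
          ε ≤ tv (jointType n fun t =>
                (xs t, decY n (enc n xs ω) ω t, decZ n (rc n (enc n xs ω) ω) ω t))
              (fun a => p0 a.1 * q a.1 a.2)) atTop (nhds 0)

/-- Coordination capacity region of the cascade network: closure of the achievable
rate–coordination triples `(R1, R2, p(y,z|x))`. -/
def cascadeCapacityCR {𝒳 𝒴 𝒵 : Type} [Fintype 𝒳] [Fintype 𝒴] [Fintype 𝒵] (p0 : 𝒳 → ℝ) :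
    Set (ℝ × ℝ × (𝒳 → 𝒴 × 𝒵 → ℝ)) :=
  closure {v | 0 ≤ v.1 ∧ 0 ≤ v.2.1 ∧ (∀ x, IsPMF (v.2.2 x)) ∧
    CascadeAchievableCR p0 v.1 v.2.1 v.2.2}
section Lemmas
open Filter Finset

lemma msgCount_pos (n : ℕ) (R : ℝ) : 0 < msgCount n R := by
  unfold msgCount; exact Nat.ceil_pos.mpr (by positivity)

/-- pack a pair of indices into a single index, mod-style. -/
noncomputable def packF {a b c : ℕ} (hc : 0 < c) (p : Fin a × Fin b) : Fin c :=
  ⟨(finProdFinEquiv p).val % c, Nat.mod_lt _ hc⟩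

noncomputable def unpackF {a b c : ℕ} (ha : 0 < a) (hb : 0 < b) (i : Fin c) : Fin a × Fin b :=
  if h : i.val < a * b then finProdFinEquiv.symm ⟨i.val, h⟩ else (⟨0, ha⟩, ⟨0, hb⟩)

lemma unpackF_packF {a b c : ℕ} (ha : 0 < a) (hb : 0 < b) (hc : 0 < c)
    (h : a * b ≤ c) (p : Fin a × Fin b) : unpackF ha hb (packF hc p) = p := by
  have hv : (packF hc p).val = (finProdFinEquiv p).val :=
    Nat.mod_eq_of_lt (lt_of_lt_of_le (finProdFinEquiv p).isLt h)
  unfold unpackF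
  rw [dif_pos (by rw [hv]; exact (finProdFinEquiv p).isLt)]
  have : (⟨(packF hc p).val, by rw [hv]; exact (finProdFinEquiv p).isLt⟩ : Fin (a*b))
      = finProdFinEquiv p := by ext; simp [hv]
  rw [this, Equiv.symm_apply_apply]

lemma sum_iid_prod {𝒳 : Type} [Fintype 𝒳] {p0 : 𝒳 → ℝ} (h : ∑ x, p0 x = 1) (l : ℕ) :
    ∑ g : Fin l → 𝒳, ∏ t, p0 (g t) = 1 := by
  classical
  have := Finset.prod_univ_sum (fun _ : Fin l => (univ : Finset 𝒳)) (fun _ x => p0 x)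
  rw [Fintype.piFinset_univ] at this
  rw [← this]
  simp [h]

end Lemmas
section Lemmas2
open Filter Finset

lemma probIIDCR_nonneg {𝒳 : Type} [Fintype 𝒳] {p0 : 𝒳 → ℝ} (h0 : ∀ x, 0 ≤ p0 x)
    {n m : ℕ} {pω : Fin m → ℝ} (hω : ∀ ω, 0 ≤ pω ω) (E : (Fin n → 𝒳) → Fin m → Prop) :
    0 ≤ probIIDCR p0 n m pω E := by
  unfold probIIDCR
  refine Finset.sum_nonneg fun xs _ => Finset.sum_nonneg fun ω _ => ?_
  split
  · exact mul_nonneg (Finset.prod_nonneg fun t _ => h0 _) (hω ω)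
  · exact le_refl 0

lemma probIIDCR_union_le {𝒳 : Type} [Fintype 𝒳] {p0 : 𝒳 → ℝ} (h0 : ∀ x, 0 ≤ p0 x)
    {n m : ℕ} {pω : Fin m → ℝ} (hω : ∀ ω, 0 ≤ pω ω)
    {E E1 E2 : (Fin n → 𝒳) → Fin m → Prop}
    (h : ∀ xs ω, E xs ω → E1 xs ω ∨ E2 xs ω) :
    probIIDCR p0 n m pω E ≤ probIIDCR p0 n m pω E1 + probIIDCR p0 n m pω E2 := by
  classical
  unfold probIIDCR
  rw [← Finset.sum_add_distrib]
  refine Finset.sum_le_sum fun xs _ => ?_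
  rw [← Finset.sum_add_distrib]
  refine Finset.sum_le_sum fun ω _ => ?_
  have hm : 0 ≤ (∏ t, p0 (xs t)) * pω ω :=
    mul_nonneg (Finset.prod_nonneg fun t _ => h0 _) (hω ω)
  by_cases hE : E xs ω
  · rcases h xs ω hE with h1 | h1 <;> simp [hE, h1] <;> split <;> simp [hm]
  · simp only [if_neg hE]
    refine add_nonneg ?_ ?_ <;> split <;> simp [hm]

end Lemmas2
section Lemmas3
open Filter Finset

lemma probIIDCR_split {𝒳 : Type} [Fintype 𝒳] {p0 : 𝒳 → ℝ} (hp0 : IsPMF p0)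
    {n k l m mA mB : ℕ} (e : Fin k ⊕ Fin l ≃ Fin n) (eω : Fin mA × Fin mB ≃ Fin m)
    {pA : Fin mA → ℝ} {pB : Fin mB → ℝ} (hpB : ∑ ω, pB ω = 1)
    (E : (Fin k → 𝒳) → Fin mA → Prop) :
    probIIDCR p0 n m (fun ω => pA (eω.symm ω).1 * pB (eω.symm ω).2)
      (fun xs ω => E (fun i => xs (e (Sum.inl i))) (eω.symm ω).1)
    = probIIDCR p0 k mA pA E := by
  classical
  unfold probIIDCR
  have hω : ∀ xs : Fin n → 𝒳,
      (∑ ω : Fin m, if E (fun i => xs (e (Sum.inl i))) (eω.symm ω).1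
          then (∏ t, p0 (xs t)) * (pA (eω.symm ω).1 * pB (eω.symm ω).2) else 0)
      = ∑ p : Fin mA × Fin mB, (if E (fun i => xs (e (Sum.inl i))) p.1
          then (∏ t, p0 (xs t)) * (pA p.1 * pB p.2) else 0) := by
    intro xs
    rw [← Equiv.sum_comp eω (fun ω => if E (fun i => xs (e (Sum.inl i))) (eω.symm ω).1
          then (∏ t, p0 (xs t)) * (pA (eω.symm ω).1 * pB (eω.symm ω).2) else 0)]
    simp
  simp only [hω]
  set eX : ((Fin k → 𝒳) × (Fin l → 𝒳)) ≃ (Fin n → 𝒳) :=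
    (Equiv.sumArrowEquivProdArrow _ _ _).symm.trans (e.arrowCongr (Equiv.refl 𝒳)) with heXdef
  have heX : ∀ fg t, eX fg t = Sum.elim fg.1 fg.2 (e.symm t) := by
    intro fg t; rw [heXdef]; rfl
  have h1 : ∀ fg (i : Fin k), eX fg (e (Sum.inl i)) = fg.1 i := by
    intro fg i; rw [heX, Equiv.symm_apply_apply]; rfl
  have h2 : ∀ fg (j : Fin l), eX fg (e (Sum.inr j)) = fg.2 j := by
    intro fg j; rw [heX, Equiv.symm_apply_apply]; rfl
  rw [← Equiv.sum_comp eX]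
  have hprod : ∀ fg : (Fin k → 𝒳) × (Fin l → 𝒳),
      (∏ t, p0 (eX fg t)) = (∏ i, p0 (fg.1 i)) * ∏ j, p0 (fg.2 j) := by
    intro fg
    rw [← Equiv.prod_comp e (fun t => p0 (eX fg t)), Fintype.prod_sum_type]
    simp [h1 fg, h2 fg]
  have hfst : ∀ fg : (Fin k → 𝒳) × (Fin l → 𝒳), (fun i => eX fg (e (Sum.inl i))) = fg.1 := by
    intro fg; funext i; exact h1 fg i
  rw [Fintype.sum_prod_type]
  have hg : ∑ g : Fin l → 𝒳, ∏ j, p0 (g j) = 1 := sum_iid_prod hp0.2 l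
  calc ∑ f : Fin k → 𝒳, ∑ g : Fin l → 𝒳, ∑ p : Fin mA × Fin mB,
        (if E (fun i => eX (f, g) (e (Sum.inl i))) p.1
          then (∏ t, p0 (eX (f, g) t)) * (pA p.1 * pB p.2) else 0)
      = ∑ f : Fin k → 𝒳, ∑ g : Fin l → 𝒳, ∑ ωA : Fin mA, ∑ ωB : Fin mB,
        ((if E f ωA then (∏ i, p0 (f i)) * pA ωA else 0) * (∏ j, p0 (g j))) * pB ωB := by
        refine Finset.sum_congr rfl fun f _ => Finset.sum_congr rfl fun g _ => ?_
        rw [Fintype.sum_prod_type]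
        refine Finset.sum_congr rfl fun ωA _ => Finset.sum_congr rfl fun ωB _ => ?_
        rw [hfst (f,g), hprod (f,g)]
        split <;> ring
    _ = ∑ f : Fin k → 𝒳, ∑ ωA : Fin mA, (if E f ωA then (∏ i, p0 (f i)) * pA ωA else 0) := by
        refine Finset.sum_congr rfl fun f _ => ?_
        rw [Finset.sum_comm]
        refine Finset.sum_congr rfl fun ωA _ => ?_
        simp only [← Finset.mul_sum, hpB, mul_one]
        rw [hg, mul_one]
end Lemmas3
section Lemmas4
open Filter Finset

lemma tv_nonneg {β : Type} [Fintype β] (p q : β → ℝ) : 0 ≤ tv p q := by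
  unfold tv
  have : (0:ℝ) ≤ ∑ a, |p a - q a| := Finset.sum_nonneg fun a _ => abs_nonneg _
  linarith

lemma jointType_split {β : Type} {k l n : ℕ} (hn : 0 < n) (hkl : k + l = n)
    (e : Fin k ⊕ Fin l ≃ Fin n) (s : Fin n → β) (a : β) :
    jointType n s a = (k:ℝ)/n * jointType k (fun i => s (e (Sum.inl i))) a
      + (l:ℝ)/n * jointType l (fun j => s (e (Sum.inr j))) a := by
  classical
  unfold jointType
  have hcard : ((univ.filter fun t => s t = a).card : ℝ)
      = ((univ.filter fun i : Fin k => s (e (Sum.inl i)) = a).card : ℝ)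
        + ((univ.filter fun j : Fin l => s (e (Sum.inr j)) = a).card : ℝ) := by
    have := Equiv.sum_comp e (fun t => if s t = a then (1:ℝ) else 0)
    rw [Fintype.sum_sum_type] at this
    simp only [Finset.sum_ite_eq, Finset.sum_boole] at this
    push_cast
    rw [Finset.card_filter, Finset.card_filter, Finset.card_filter]
    push_cast
    convert this.symm using 2 <;> simp
  rw [hcard]
  have hnR : (0:ℝ) < n := by exact_mod_cast hn
  rcases Nat.eq_zero_or_pos k with hk | hk
  · subst hk
    have h2 : ((univ.filter fun i : Fin 0 => s (e (Sum.inl i)) = a).card : ℝ) = 0 := by simp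
    rw [h2]
    simp only [Nat.cast_zero, zero_div, zero_mul, zero_add]
    have hl : l = n := by omega
    subst hl
    field_simp
  · rcases Nat.eq_zero_or_pos l with hl | hl
    · subst hl
      have h2 : ((univ.filter fun j : Fin 0 => s (e (Sum.inr j)) = a).card : ℝ) = 0 := by simp
      rw [h2]
      have hk2 : k = n := by omega
      subst hk2
      simp [hnR.ne']
    · have hkR : (0:ℝ) < k := by exact_mod_cast hk
      have hlR : (0:ℝ) < l := by exact_mod_cast hl
      field_simp

lemma tv_combine {β : Type} [Fintype β] {n k l : ℕ} (hn : 0 < n) (hkl : k + l = n)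
    (e : Fin k ⊕ Fin l ≃ Fin n) (s : Fin n → β) (pA pB : β → ℝ)
    (hA0 : ∀ b, 0 ≤ pA b) (hA1 : ∑ b, pA b = 1)
    (hB0 : ∀ b, 0 ≤ pB b) (hB1 : ∑ b, pB b = 1)
    (lam : ℝ) (hd : |(k:ℝ)/n - lam| ≤ 1/n) :
    tv (jointType n s) (fun b => lam * pA b + (1-lam) * pB b)
      ≤ tv (jointType k (fun i => s (e (Sum.inl i)))) pA
        + tv (jointType l (fun j => s (e (Sum.inr j)))) pB + 1/n := by
  classical
  set tA := jointType k (fun i => s (e (Sum.inl i)))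
  set tB := jointType l (fun j => s (e (Sum.inr j)))
  set r : ℝ := (k:ℝ)/n
  have hnR : (0:ℝ) < n := by exact_mod_cast hn
  have hr0 : 0 ≤ r := by positivity
  have hr1 : r ≤ 1 := by
    rw [div_le_one hnR]; exact_mod_cast Nat.le.intro hkl
  have hc : (k:ℝ) + (l:ℝ) = (n:ℝ) := by exact_mod_cast hkl
  have hlr : (l:ℝ)/n = 1 - r := by
    show (l:ℝ)/n = 1 - (k:ℝ)/n
    field_simp
    linarith
  have key : ∀ b, |jointType n s b - (lam * pA b + (1-lam) * pB b)|
      ≤ r * |tA b - pA b| + (1-r) * |tB b - pB b| + |r - lam| * (pA b + pB b) := by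
    intro b
    rw [jointType_split hn hkl e s b]
    have : (k:ℝ)/n * tA b + (l:ℝ)/n * tB b - (lam * pA b + (1-lam) * pB b)
        = r * (tA b - pA b) + (1-r) * (tB b - pB b) + (r - lam) * (pA b - pB b) := by
      rw [hlr]; ring
    rw [this]
    calc |r * (tA b - pA b) + (1-r) * (tB b - pB b) + (r - lam) * (pA b - pB b)|
        ≤ |r * (tA b - pA b) + (1-r) * (tB b - pB b)| + |(r - lam) * (pA b - pB b)| :=
          abs_add_le _ _
      _ ≤ |r * (tA b - pA b)| + |(1-r) * (tB b - pB b)| + |(r - lam) * (pA b - pB b)| := by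
          linarith [abs_add_le (r * (tA b - pA b)) ((1-r) * (tB b - pB b))]
      _ ≤ r * |tA b - pA b| + (1-r) * |tB b - pB b| + |r - lam| * (pA b + pB b) := by
          rw [abs_mul, abs_mul, abs_mul, abs_of_nonneg hr0, abs_of_nonneg (by linarith : (0:ℝ) ≤ 1 - r)]
          have : |pA b - pB b| ≤ pA b + pB b := by
            have := hA0 b; have := hB0 b
            rw [abs_le]; constructor <;> linarith
          have h3 : 0 ≤ |r - lam| := abs_nonneg _
          nlinarith
  have hsum : ∑ b, |jointType n s b - (lam * pA b + (1-lam) * pB b)|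
      ≤ r * ∑ b, |tA b - pA b| + (1-r) * ∑ b, |tB b - pB b| + |r - lam| * 2 := by
    calc ∑ b, |jointType n s b - (lam * pA b + (1-lam) * pB b)|
        ≤ ∑ b, (r * |tA b - pA b| + (1-r) * |tB b - pB b| + |r - lam| * (pA b + pB b)) :=
          Finset.sum_le_sum fun b _ => key b
      _ = r * ∑ b, |tA b - pA b| + (1-r) * ∑ b, |tB b - pB b| + |r - lam| * 2 := by
          rw [Finset.sum_add_distrib, Finset.sum_add_distrib, ← Finset.mul_sum,
            ← Finset.mul_sum, ← Finset.mul_sum, Finset.sum_add_distrib, hA1, hB1]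
          ring
  unfold tv
  have h2A : (0:ℝ) ≤ ∑ b, |tA b - pA b| := Finset.sum_nonneg fun b _ => abs_nonneg _
  have h2B : (0:ℝ) ≤ ∑ b, |tB b - pB b| := Finset.sum_nonneg fun b _ => abs_nonneg _
  have hda : |r - lam| ≤ 1/n := hd
  nlinarith
end Lemmas4
section Lemmas4b
open Filter Finset

lemma event_split {β : Type} [Fintype β] {n k l : ℕ} (hn : 0 < n) (hkl : k + l = n)
    (e : Fin k ⊕ Fin l ≃ Fin n) {s : Fin n → β} {sA : Fin k → β} {sB : Fin l → β}
    (hsA : ∀ i, s (e (Sum.inl i)) = sA i) (hsB : ∀ j, s (e (Sum.inr j)) = sB j)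
    (pA pB : β → ℝ) (hA0 : ∀ b, 0 ≤ pA b) (hA1 : ∑ b, pA b = 1)
    (hB0 : ∀ b, 0 ≤ pB b) (hB1 : ∑ b, pB b = 1)
    {lam : ℝ} (hd : |(k:ℝ)/n - lam| ≤ 1/n)
    {ε : ℝ} (h1n : 1/(n:ℝ) ≤ ε/3)
    (hE : ε ≤ tv (jointType n s) (fun b => lam * pA b + (1-lam) * pB b)) :
    ε/3 ≤ tv (jointType k sA) pA ∨ ε/3 ≤ tv (jointType l sB) pB := by
  by_contra hcon
  push_neg at hcon
  have hcombine := tv_combine hn hkl e s pA pB hA0 hA1 hB0 hB1 lam hd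
  rw [show (fun i => s (e (Sum.inl i))) = sA from funext hsA,
      show (fun j => s (e (Sum.inr j))) = sB from funext hsB] at hcombine
  obtain ⟨c1, c2⟩ := hcon
  linarith

end Lemmas4b
section Lemmas5
open Filter Finset

lemma msgCount_mul_le {R R' δ a b : ℝ} (hR : 0 ≤ R) (hR' : 0 ≤ R')
    (ha : 0 ≤ a) (hb : 0 ≤ b) {n k l : ℕ}
    (hk : (k:ℝ) ≤ a * n) (hl : (l:ℝ) ≤ b * n + 1) (hn : R' + 2 ≤ (n:ℝ) * δ) :
    msgCount k R * msgCount l R' ≤ msgCount n (a*R + b*R' + δ) := by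
  unfold msgCount
  set x : ℝ := (2:ℝ) ^ ((k:ℝ) * R) with hx
  set y : ℝ := (2:ℝ) ^ ((l:ℝ) * R') with hy
  have hx1 : 1 ≤ x := Real.one_le_rpow (by norm_num) (by positivity)
  have hy1 : 1 ≤ y := Real.one_le_rpow (by norm_num) (by positivity)
  have hxy : (x + 1) * (y + 1) ≤ 4 * (x * y) := by nlinarith
  have hexp : (k:ℝ) * R + (l:ℝ) * R' + 2 ≤ (n:ℝ) * (a*R + b*R' + δ) := by
    have h1 : (k:ℝ) * R ≤ a * n * R := mul_le_mul_of_nonneg_right hk hR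
    have h2 : (l:ℝ) * R' ≤ (b * n + 1) * R' := mul_le_mul_of_nonneg_right hl hR'
    nlinarith
  have h4 : 4 * (x * y) = (2:ℝ) ^ ((k:ℝ) * R + (l:ℝ) * R' + 2) := by
    rw [Real.rpow_add (by norm_num), Real.rpow_add (by norm_num)]
    have : (2:ℝ) ^ (2:ℝ) = 4 := by
      rw [show (2:ℝ) = ((2:ℕ):ℝ) by norm_num, Real.rpow_natCast]; norm_num
    rw [this]; ring
  have hmono : (2:ℝ) ^ ((k:ℝ) * R + (l:ℝ) * R' + 2) ≤ (2:ℝ) ^ ((n:ℝ) * (a*R + b*R' + δ)) :=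
    Real.rpow_le_rpow_of_exponent_le (by norm_num) hexp
  have hceil : ((⌈x⌉₊ * ⌈y⌉₊ : ℕ) : ℝ) ≤ (2:ℝ) ^ ((n:ℝ) * (a*R + b*R' + δ)) := by
    push_cast
    have cx : (⌈x⌉₊ : ℝ) ≤ x + 1 := le_of_lt (Nat.ceil_lt_add_one (by positivity))
    have cy : (⌈y⌉₊ : ℝ) ≤ y + 1 := le_of_lt (Nat.ceil_lt_add_one (by positivity))
    have hc0x : (0:ℝ) ≤ (⌈x⌉₊:ℝ) := by positivity
    have hc0y : (0:ℝ) ≤ (⌈y⌉₊:ℝ) := by positivity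
    calc (⌈x⌉₊:ℝ) * (⌈y⌉₊:ℝ) ≤ (x+1)*(y+1) := by nlinarith
      _ ≤ 4 * (x*y) := hxy
      _ = _ := h4
      _ ≤ _ := hmono
  have := Nat.le_ceil ((2:ℝ) ^ ((n:ℝ) * (a*R + b*R' + δ)))
  exact_mod_cast hceil.trans this
end Lemmas5
section Lemmas6
open Filter Finset

lemma pmf_joint {𝒳 W : Type} [Fintype 𝒳] [Fintype W] {p0 : 𝒳 → ℝ} {q : 𝒳 → W → ℝ}
    (hp0 : IsPMF p0) (hq : ∀ x, IsPMF (q x)) :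
    IsPMF (fun c : 𝒳 × W => p0 c.1 * q c.1 c.2) := by
  constructor
  · intro c; exact mul_nonneg (hp0.1 c.1) ((hq c.1).1 c.2)
  · rw [Fintype.sum_prod_type]
    calc ∑ x, ∑ w, p0 x * q x w = ∑ x, p0 x * ∑ w, q x w := by
          simp [Finset.mul_sum]
      _ = 1 := by simp only [fun x => (hq x).2, mul_one]; exact hp0.2

set_option maxHeartbeats 2000000 in
lemma achievable_mix {𝒳 𝒴 𝒵 : Type} [Fintype 𝒳] [Fintype 𝒴] [Fintype 𝒵]
    {p0 : 𝒳 → ℝ} (hp0 : IsPMF p0)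
    {R1 R2 R1' R2' : ℝ} {q q' : 𝒳 → 𝒴 × 𝒵 → ℝ}
    (hq : ∀ x, IsPMF (q x)) (hq' : ∀ x, IsPMF (q' x))
    (hR1 : 0 ≤ R1) (hR2 : 0 ≤ R2) (hR1' : 0 ≤ R1') (hR2' : 0 ≤ R2')
    {a b : ℝ} (ha : 0 < a) (hb : 0 < b) (hab : a + b = 1)
    {δ : ℝ} (hδ : 0 < δ)
    (hA : CascadeAchievableCR p0 R1 R2 q) (hB : CascadeAchievableCR p0 R1' R2' q') :
    CascadeAchievableCR p0 (a*R1 + b*R1' + δ) (a*R2 + b*R2' + δ)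
      (fun x c => a * q x c + b * q' x c) := by
  classical
  obtain ⟨mA, pωA, encA, rcA, decYA, decZA, hpmfA, hconvA⟩ := hA
  obtain ⟨mB, pωB, encB, rcB, decYB, decZB, hpmfB, hconvB⟩ := hB
  set Rs1 : ℝ := a*R1 + b*R1' + δ with hRs1
  set Rs2 : ℝ := a*R2 + b*R2' + δ with hRs2
  set K : ℕ → ℕ := fun n => ⌊a * n⌋₊ with hK
  have hKle : ∀ n, K n ≤ n := by
    intro n
    have h1 : a * n ≤ (n:ℝ) := by nlinarith [Nat.cast_nonneg (α := ℝ) n]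
    have := Nat.floor_le_floor h1
    simpa using this
  set L : ℕ → ℕ := fun n => n - K n with hL
  have hKL : ∀ n, K n + L n = n := fun n => Nat.add_sub_cancel' (hKle n)
  set e : (n : ℕ) → (Fin (K n) ⊕ Fin (L n) ≃ Fin n) :=
    fun n => finSumFinEquiv.trans (finCongr (hKL n)) with he
  -- combined code
  refine ⟨fun n => mA (K n) * mB (L n),
    fun n ω => pωA (K n) (finProdFinEquiv.symm ω).1 * pωB (L n) (finProdFinEquiv.symm ω).2,
    fun n xs ω => packF (msgCount_pos n Rs1)
      (encA (K n) (fun i => xs (e n (Sum.inl i))) (finProdFinEquiv.symm ω).1,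
       encB (L n) (fun j => xs (e n (Sum.inr j))) (finProdFinEquiv.symm ω).2),
    fun n i ω => packF (msgCount_pos n Rs2)
      (rcA (K n) (unpackF (msgCount_pos (K n) R1) (msgCount_pos (L n) R1') i).1
         (finProdFinEquiv.symm ω).1,
       rcB (L n) (unpackF (msgCount_pos (K n) R1) (msgCount_pos (L n) R1') i).2
         (finProdFinEquiv.symm ω).2),
    fun n i ω t => Sum.elim
      (fun i' => decYA (K n) (unpackF (msgCount_pos (K n) R1) (msgCount_pos (L n) R1') i).1
         (finProdFinEquiv.symm ω).1 i')
      (fun j' => decYB (L n) (unpackF (msgCount_pos (K n) R1) (msgCount_pos (L n) R1') i).2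
         (finProdFinEquiv.symm ω).2 j') ((e n).symm t),
    fun n i ω t => Sum.elim
      (fun i' => decZA (K n) (unpackF (msgCount_pos (K n) R2) (msgCount_pos (L n) R2') i).1
         (finProdFinEquiv.symm ω).1 i')
      (fun j' => decZB (L n) (unpackF (msgCount_pos (K n) R2) (msgCount_pos (L n) R2') i).2
         (finProdFinEquiv.symm ω).2 j') ((e n).symm t),
    ?_, ?_⟩
  · -- PMF of combined common randomness
    intro n
    constructor
    · intro ω
      exact mul_nonneg ((hpmfA (K n)).1 _) ((hpmfB (L n)).1 _)
    · rw [← Equiv.sum_comp finProdFinEquiv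
        (fun ω => pωA (K n) (finProdFinEquiv.symm ω).1 * pωB (L n) (finProdFinEquiv.symm ω).2)]
      simp only [Equiv.symm_apply_apply]
      rw [Fintype.sum_prod_type]
      simp only [← Finset.mul_sum, (hpmfB (L n)).2, mul_one]
      exact (hpmfA (K n)).2
  · intro ε hε
    -- component convergence
    have hε3 : (0:ℝ) < ε/3 := by positivity
    have hFA := hconvA (ε/3) hε3
    have hFB := hconvB (ε/3) hε3
    -- K and L tend to infinity
    have hac : Tendsto (fun n : ℕ => a * (n:ℝ)) atTop atTop :=
      Tendsto.const_mul_atTop ha tendsto_natCast_atTop_atTop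
    have hKt : Tendsto K atTop atTop := (tendsto_nat_floor_atTop (α := ℝ)).comp hac
    have hbc : Tendsto (fun n : ℕ => b * (n:ℝ)) atTop atTop :=
      Tendsto.const_mul_atTop hb tendsto_natCast_atTop_atTop
    have hLt : Tendsto L atTop atTop := by
      have hfl : Tendsto (fun n : ℕ => ⌊b * (n:ℝ)⌋₊) atTop atTop :=
        (tendsto_nat_floor_atTop (α := ℝ)).comp hbc
      refine tendsto_atTop_mono ?_ hfl
      intro n
      have hfa := Nat.floor_le (mul_nonneg ha.le (Nat.cast_nonneg (α := ℝ) n))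
      have hfb := Nat.floor_le (mul_nonneg hb.le (Nat.cast_nonneg (α := ℝ) n))
      have h3 : a*(n:ℝ) + b*(n:ℝ) = (n:ℝ) := by nlinarith
      have h2 : ⌊a*(n:ℝ)⌋₊ + ⌊b*(n:ℝ)⌋₊ ≤ n := by exact_mod_cast
        calc ((⌊a*(n:ℝ)⌋₊ + ⌊b*(n:ℝ)⌋₊ : ℕ) : ℝ) = (⌊a*(n:ℝ)⌋₊ : ℝ) + (⌊b*(n:ℝ)⌋₊:ℝ) := by push_cast; ring
          _ ≤ (n:ℝ) := by linarith
      show ⌊b * (n:ℝ)⌋₊ ≤ n - K n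
      have : K n = ⌊a * (n:ℝ)⌋₊ := rfl
      omega
    -- the upper bounding sequence
    have hup : Tendsto (fun n =>
        probIIDCR p0 (K n) (mA (K n)) (pωA (K n)) (fun xs ω => ε/3 ≤
          tv (jointType (K n) fun t =>
              (xs t, decYA (K n) (encA (K n) xs ω) ω t,
                decZA (K n) (rcA (K n) (encA (K n) xs ω) ω) ω t))
            (fun c => p0 c.1 * q c.1 c.2))
        + probIIDCR p0 (L n) (mB (L n)) (pωB (L n)) (fun xs ω => ε/3 ≤
          tv (jointType (L n) fun t =>
              (xs t, decYB (L n) (encB (L n) xs ω) ω t,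
                decZB (L n) (rcB (L n) (encB (L n) xs ω) ω) ω t))
            (fun c => p0 c.1 * q' c.1 c.2))) atTop (nhds 0) := by
      have h1 := hFA.comp hKt
      have h2 := hFB.comp hLt
      simpa using h1.add h2
    refine tendsto_of_tendsto_of_tendsto_of_le_of_le' tendsto_const_nhds hup ?_ ?_
    · filter_upwards with n
      exact probIIDCR_nonneg hp0.1
        (fun ω => mul_nonneg ((hpmfA (K n)).1 _) ((hpmfB (L n)).1 _)) _
    -- the eventual upper bound
    have hev1 : ∀ᶠ n : ℕ in atTop, R1' + 2 ≤ (n:ℝ)*δ :=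
      (Tendsto.atTop_mul_const hδ tendsto_natCast_atTop_atTop).eventually_ge_atTop _
    have hev2 : ∀ᶠ n : ℕ in atTop, R2' + 2 ≤ (n:ℝ)*δ :=
      (Tendsto.atTop_mul_const hδ tendsto_natCast_atTop_atTop).eventually_ge_atTop _
    have hev3 : ∀ᶠ n : ℕ in atTop, (3/ε : ℝ) ≤ (n:ℝ) :=
      tendsto_natCast_atTop_atTop.eventually_ge_atTop _
    have hev4 : ∀ᶠ n : ℕ in atTop, 1 ≤ n := eventually_ge_atTop 1
    filter_upwards [hev1, hev2, hev3, hev4] with n h1 h2 h3 h4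
    -- basic facts about n, K n, L n
    have hn0 : 0 < n := h4
    have hnR : (0:ℝ) < n := by exact_mod_cast hn0
    have hKa : (K n : ℝ) ≤ a * n := Nat.floor_le (by positivity)
    have hKa' : a * n - 1 < (K n : ℝ) := Nat.sub_one_lt_floor _
    have habn : a*(n:ℝ) + b*(n:ℝ) = (n:ℝ) := by nlinarith
    have hLcast : (L n : ℝ) = (n:ℝ) - K n := by
      have : (L n : ℕ) = n - K n := rfl
      rw [this, Nat.cast_sub (hKle n)]
    have hLb : (L n : ℝ) ≤ b * n + 1 := by rw [hLcast]; linarith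
    have hc1 : msgCount (K n) R1 * msgCount (L n) R1' ≤ msgCount n Rs1 :=
      msgCount_mul_le hR1 hR1' ha.le hb.le hKa hLb h1
    have hc2 : msgCount (K n) R2 * msgCount (L n) R2' ≤ msgCount n Rs2 :=
      msgCount_mul_le hR2 hR2' ha.le hb.le hKa hLb h2
    have hd : |(K n:ℝ)/n - a| ≤ 1/n := by
      have e1 : (K n:ℝ)/n - a = ((K n:ℝ) - a*n)/n := by field_simp
      rw [e1, abs_div, abs_of_pos hnR]
      have e2 : |(K n:ℝ) - a*n| ≤ 1 := abs_le.mpr ⟨by linarith, by linarith⟩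
      exact (div_le_div_iff_of_pos_right hnR).mpr e2
    have h1n : 1/(n:ℝ) ≤ ε/3 := by
      rw [div_le_div_iff₀ hnR (by norm_num)]
      have h3' : 3 ≤ ε * n := by
        have := (div_le_iff₀ hε).mp h3
        linarith
      linarith
    have hmeq : (fun c : 𝒳 × 𝒴 × 𝒵 => p0 c.1 * (a * q c.1 c.2 + b * q' c.1 c.2))
        = fun c : 𝒳 × 𝒴 × 𝒵 => a * (p0 c.1 * q c.1 c.2) + (1-a) * (p0 c.1 * q' c.1 c.2) := by
      funext c
      have hb' : b = 1 - a := by linarith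
      rw [hb']; ring
    set e' : Fin (L n) ⊕ Fin (K n) ≃ Fin n := (Equiv.sumComm _ _).trans (e n) with he'
    set eω' : Fin (mB (L n)) × Fin (mA (K n)) ≃ Fin (mA (K n) * mB (L n)) :=
      (Equiv.prodComm _ _).trans finProdFinEquiv with heω'
    refine le_trans (probIIDCR_union_le hp0.1
      (fun ω => mul_nonneg ((hpmfA (K n)).1 _) ((hpmfB (L n)).1 _))
      (E1 := fun xs ω => (fun xsk ωa => ε/3 ≤
        tv (jointType (K n) fun t =>
            (xsk t, decYA (K n) (encA (K n) xsk ωa) ωa t,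
              decZA (K n) (rcA (K n) (encA (K n) xsk ωa) ωa) ωa t))
          fun c => p0 c.1 * q c.1 c.2)
        (fun i => xs (e n (Sum.inl i))) (finProdFinEquiv.symm ω).1)
      (E2 := fun xs ω => (fun xsl ωb => ε/3 ≤
        tv (jointType (L n) fun t =>
            (xsl t, decYB (L n) (encB (L n) xsl ωb) ωb t,
              decZB (L n) (rcB (L n) (encB (L n) xsl ωb) ωb) ωb t))
          fun c => p0 c.1 * q' c.1 c.2)
        (fun j => xs (e' (Sum.inl j))) (eω'.symm ω).1)
      ?_) ?_
    · -- event implication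
      intro xs ω hE
      beta_reduce at hE
      rw [hmeq] at hE
      refine event_split hn0 (hKL n) (e n) ?_ ?_
        (fun c : 𝒳 × 𝒴 × 𝒵 => p0 c.1 * q c.1 c.2) (fun c : 𝒳 × 𝒴 × 𝒵 => p0 c.1 * q' c.1 c.2)
        (pmf_joint hp0 hq).1 (pmf_joint hp0 hq).2
        (pmf_joint hp0 hq').1 (pmf_joint hp0 hq').2 hd h1n hE
      all_goals {
        first
        | (intro i
           have hu1 := unpackF_packF (msgCount_pos (K n) R1) (msgCount_pos (L n) R1')
             (msgCount_pos n Rs1) hc1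
             (encA (K n) (fun i => xs (e n (Sum.inl i))) (finProdFinEquiv.symm ω).1,
              encB (L n) (fun j => xs (e n (Sum.inr j))) (finProdFinEquiv.symm ω).2)
           have hu2 := unpackF_packF (msgCount_pos (K n) R2) (msgCount_pos (L n) R2')
             (msgCount_pos n Rs2) hc2
             (rcA (K n) (encA (K n) (fun i => xs (e n (Sum.inl i))) (finProdFinEquiv.symm ω).1)
               (finProdFinEquiv.symm ω).1,
              rcB (L n) (encB (L n) (fun j => xs (e n (Sum.inr j))) (finProdFinEquiv.symm ω).2)
               (finProdFinEquiv.symm ω).2)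
           simp only [Equiv.symm_apply_apply, hu1, hu2, Sum.elim_inl, Sum.elim_inr,
             he', heω', Equiv.trans_apply, Equiv.symm_trans_apply, Equiv.sumComm_apply,
             Equiv.prodComm_symm, Equiv.prodComm_apply, Sum.swap_inl, Sum.swap_inr,
             Prod.swap_prod_mk, Prod.fst_swap, Prod.snd_swap]
           try rfl)
      }
    · -- identify the two probabilities
      have hswap : (fun ω : Fin (mA (K n) * mB (L n)) =>
          pωA (K n) (finProdFinEquiv.symm ω).1 * pωB (L n) (finProdFinEquiv.symm ω).2)
          = (fun ω => pωB (L n) (eω'.symm ω).1 * pωA (K n) (eω'.symm ω).2) := by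
        funext ω
        rw [heω']
        simp [Equiv.prodComm, mul_comm]
      have hA2 := probIIDCR_split (pA := pωA (K n)) hp0 (e n) finProdFinEquiv (hpmfB (L n)).2
        (fun xsk ωa => ε/3 ≤
          tv (jointType (K n) fun t =>
              (xsk t, decYA (K n) (encA (K n) xsk ωa) ωa t,
                decZA (K n) (rcA (K n) (encA (K n) xsk ωa) ωa) ωa t))
            fun c => p0 c.1 * q c.1 c.2)
      have hB2 := probIIDCR_split (pA := pωB (L n)) hp0 e' eω' (hpmfA (K n)).2
        (fun xsl ωb => ε/3 ≤
          tv (jointType (L n) fun t =>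
              (xsl t, decYB (L n) (encB (L n) xsl ωb) ωb t,
                decZB (L n) (rcB (L n) (encB (L n) xsl ωb) ωb) ωb t))
            fun c => p0 c.1 * q' c.1 c.2)
      rw [hA2, hswap, hB2]
end Lemmas6
section Lemmas7
open Filter Finset

def cascadeS {𝒳 𝒴 𝒵 : Type} [Fintype 𝒳] [Fintype 𝒴] [Fintype 𝒵] (p0 : 𝒳 → ℝ) :
    Set (ℝ × ℝ × (𝒳 → 𝒴 × 𝒵 → ℝ)) :=
  {v | 0 ≤ v.1 ∧ 0 ≤ v.2.1 ∧ (∀ x, IsPMF (v.2.2 x)) ∧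
    CascadeAchievableCR p0 v.1 v.2.1 v.2.2}

lemma cascadeCapacityCR_eq {𝒳 𝒴 𝒵 : Type} [Fintype 𝒳] [Fintype 𝒴] [Fintype 𝒵] (p0 : 𝒳 → ℝ) :
    cascadeCapacityCR (𝒴 := 𝒴) (𝒵 := 𝒵) p0 = closure (cascadeS p0) := rfl

lemma mix_mem_closure {𝒳 𝒴 𝒵 : Type} [Fintype 𝒳] [Fintype 𝒴] [Fintype 𝒵]
    {p0 : 𝒳 → ℝ} (hp0 : IsPMF p0) {u v : ℝ × ℝ × (𝒳 → 𝒴 × 𝒵 → ℝ)}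
    (hu : u ∈ cascadeS p0) (hv : v ∈ cascadeS p0)
    {a b : ℝ} (ha : 0 ≤ a) (hb : 0 ≤ b) (hab : a + b = 1) :
    a • u + b • v ∈ closure (cascadeS p0) := by
  rcases eq_or_lt_of_le ha with ha0 | ha'
  · have hb1 : b = 1 := by linarith
    rw [← ha0, hb1]
    simpa using subset_closure hv
  rcases eq_or_lt_of_le hb with hb0 | hb'
  · have ha1 : a = 1 := by linarith
    rw [← hb0, ha1]
    simpa using subset_closure hu
  obtain ⟨u1, u2, qu⟩ := u
  obtain ⟨v1, v2, qv⟩ := v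
  obtain ⟨hu1, hu2, hupmf, huach⟩ := hu
  obtain ⟨hv1, hv2, hvpmf, hvach⟩ := hv
  have hpt : a • ((u1, u2, qu) : ℝ × ℝ × (𝒳 → 𝒴 × 𝒵 → ℝ)) + b • (v1, v2, qv)
      = (a*u1 + b*v1, a*u2 + b*v2, fun x c => a * qu x c + b * qv x c) := by
    refine Prod.ext ?_ (Prod.ext ?_ ?_)
    · simp [smul_eq_mul]
    · simp [smul_eq_mul]
    · funext x c
      simp [Pi.add_apply, Pi.smul_apply, smul_eq_mul]
  rw [hpt]
  have h0 : Tendsto (fun m : ℕ => 1/((m:ℝ)+1)) atTop (nhds 0) :=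
    tendsto_one_div_add_atTop_nhds_zero_nat
  refine mem_closure_of_tendsto (b := (atTop : Filter ℕ)) (f := fun m : ℕ =>
    ((a*u1 + b*v1 + 1/((m:ℝ)+1), a*u2 + b*v2 + 1/((m:ℝ)+1),
      fun x c => a * qu x c + b * qv x c) : ℝ × ℝ × (𝒳 → 𝒴 × 𝒵 → ℝ))) ?_ ?_
  · have hc1 : Tendsto (fun m : ℕ => a*u1 + b*v1 + 1/((m:ℝ)+1)) atTop (nhds (a*u1 + b*v1)) := by
      simpa using tendsto_const_nhds.add h0
    have hc2 : Tendsto (fun m : ℕ => a*u2 + b*v2 + 1/((m:ℝ)+1)) atTop (nhds (a*u2 + b*v2)) := by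
      simpa using tendsto_const_nhds.add h0
    exact hc1.prodMk_nhds (hc2.prodMk_nhds tendsto_const_nhds)
  · refine Filter.Eventually.of_forall fun m => ?_
    have hδ : (0:ℝ) < 1/((m:ℝ)+1) := by positivity
    refine ⟨?_, ?_, ?_, ?_⟩
    · have := mul_nonneg ha hu1; have := mul_nonneg hb hv1; simp only; linarith
    · have := mul_nonneg ha hu2; have := mul_nonneg hb hv2; simp only; linarith
    · intro x
      constructor
      · intro c
        exact add_nonneg (mul_nonneg ha ((hupmf x).1 c)) (mul_nonneg hb ((hvpmf x).1 c))
      · rw [Finset.sum_add_distrib, ← Finset.mul_sum, ← Finset.mul_sum,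
          (hupmf x).2, (hvpmf x).2]
        linarith
    · exact achievable_mix hp0 hupmf hvpmf hu1 hu2 hv1 hv2 ha' hb' hab hδ huach hvach

end Lemmas7

/-- The coordination capacity region of the cascade network is convex; consequently the
rate–coordination region (fixed conditional pmf) and the coordination–rate region
(fixed rate pair) are convex. -/
theorem cascade_regions_convex {𝒳 𝒴 𝒵 : Type} [Fintype 𝒳] [Fintype 𝒴] [Fintype 𝒵]
    (p0 : 𝒳 → ℝ) (hp0 : IsPMF p0) :
    Convex ℝ (cascadeCapacityCR (𝒴 := 𝒴) (𝒵 := 𝒵) p0) ∧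
    (∀ q : 𝒳 → 𝒴 × 𝒵 → ℝ,
      Convex ℝ {r : ℝ × ℝ | (r.1, r.2, q) ∈ cascadeCapacityCR p0}) ∧
    (∀ R1 R2 : ℝ,
      Convex ℝ {q : 𝒳 → 𝒴 × 𝒵 → ℝ | (R1, R2, q) ∈ cascadeCapacityCR p0}) := by
  have hC : Convex ℝ (cascadeCapacityCR (𝒴 := 𝒴) (𝒵 := 𝒵) p0) := by
    rw [cascadeCapacityCR_eq]
    intro x hx y hy a b ha hb hab
    have hf : Continuous (fun p : (ℝ × ℝ × (𝒳 → 𝒴 × 𝒵 → ℝ)) × (ℝ × ℝ × (𝒳 → 𝒴 × 𝒵 → ℝ)) =>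
        a • p.1 + b • p.2) := (continuous_fst.const_smul a).add (continuous_snd.const_smul b)
    have hxy : (x, y) ∈ closure ((cascadeS (𝒴 := 𝒴) (𝒵 := 𝒵) p0) ×ˢ (cascadeS p0)) := by
      rw [closure_prod_eq]; exact ⟨hx, hy⟩
    have h1 := image_closure_subset_closure_image
      (s := (cascadeS (𝒴 := 𝒴) (𝒵 := 𝒵) p0) ×ˢ (cascadeS p0)) hf
    have h2 : (fun p : (ℝ × ℝ × (𝒳 → 𝒴 × 𝒵 → ℝ)) × (ℝ × ℝ × (𝒳 → 𝒴 × 𝒵 → ℝ)) =>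
        a • p.1 + b • p.2) '' ((cascadeS p0) ×ˢ (cascadeS p0)) ⊆ closure (cascadeS p0) := by
      rintro w ⟨⟨u, v⟩, ⟨hu, hv⟩, rfl⟩
      exact mix_mem_closure hp0 hu hv ha hb hab
    have h3 := h1 (Set.mem_image_of_mem _ hxy)
    have h4 := (closure_mono h2) h3
    rwa [closure_closure] at h4
  refine ⟨hC, ?_, ?_⟩
  · intro q r hr s hs a b ha hb hab
    have hmem := hC hr hs ha hb hab
    have heq : a • ((r.1, r.2, q) : ℝ × ℝ × (𝒳 → 𝒴 × 𝒵 → ℝ)) + b • (s.1, s.2, q)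
        = ((a • r + b • s).1, (a • r + b • s).2, q) := by
      refine Prod.ext ?_ (Prod.ext ?_ ?_)
      · simp [smul_eq_mul]
      · simp [smul_eq_mul]
      · funext x c
        show a * q x c + b * q x c = q x c
        rw [← add_mul, hab, one_mul]
    rw [heq] at hmem
    exact hmem
  · intro R1 R2 q1 hq1 q2 hq2 a b ha hb hab
    have hmem := hC hq1 hq2 ha hb hab
    have heq : a • ((R1, R2, q1) : ℝ × ℝ × (𝒳 → 𝒴 × 𝒵 → ℝ)) + b • (R1, R2, q2)
        = (R1, R2, a • q1 + b • q2) := by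
      refine Prod.ext ?_ (Prod.ext ?_ ?_)
      · show a * R1 + b * R1 = R1
        rw [← add_mul, hab, one_mul]
      · show a * R2 + b * R2 = R2
        rw [← add_mul, hab, one_mul]
      · rfl
    rw [heq] at hmem
    exact hmem
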